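/- Let R be a Dedekind domain. Every finitely generated R-module M is isomorphic to a direct sum (⊕_{i=1}^k R/a_i) ⊕ P, where a_1 ⊇ a_2 ⊇ ⋯ ⊇ a_k is a decreasing chain of nonzero ideals of R and P is a finitely generated projective R-module. -/

import Mathlib

open Submodule UniqueFactorizationMonoid


section Helpers

variable {R : Type*} [CommRing R]

theorem aux13_prod_mono {ι : Type*} (s : Finset ι) (f g : ι → Ideal R)
    (h : ∀ i ∈ s, f i ≤ g i) : ∏ i ∈ s, f i ≤ ∏ i ∈ s, g i := by
  classical
  induction s using Finset.induction_on with
  | empty => simp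
  | @insert a s ha ih =>
    rw [Finset.prod_insert ha, Finset.prod_insert ha]
    exact Ideal.mul_mono (h a (Finset.mem_insert_self a s))
      (ih fun i hi => h i (Finset.mem_insert_of_mem hi))

/-- flip a double product -/
def aux13Flip (R : Type*) [Semiring R] {α β : Type*} (A : α → β → Type*)
    [∀ a b, AddCommMonoid (A a b)] [∀ a b, Module R (A a b)] :
    ((a : α) → (b : β) → A a b) ≃ₗ[R] (b : β) → (a : α) → A a b where
  toFun f b a := f a b
  invFun f a b := f b a
  map_add' _ _ := rfl
  map_smul' _ _ := rfl
  left_inv _ := rfl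
  right_inv _ := rfl

def aux13ProdSubsingleton (R : Type*) [Semiring R] (M N : Type*) [AddCommMonoid M]
    [AddCommMonoid N] [Module R M] [Module R N] [Subsingleton N] : (M × N) ≃ₗ[R] M where
  toFun := Prod.fst
  invFun m := (m, 0)
  map_add' _ _ := rfl
  map_smul' _ _ := rfl
  left_inv x := Prod.ext rfl (Subsingleton.elim _ _)
  right_inv _ := rfl

def aux13PiSplit (R : Type*) [Semiring R] {ι : Type*} (p : ι → Prop) [DecidablePred p]
    (A : ι → Type*) [∀ i, AddCommMonoid (A i)] [∀ i, Module R (A i)] :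
    ((i : ι) → A i) ≃ₗ[R] ((i : {x // p x}) → A i.1) × ((i : {x // ¬ p x}) → A i.1) :=
  { Equiv.piEquivPiSubtypeProd p A with
    map_add' := fun _ _ => rfl
    map_smul' := fun _ _ => rfl }

theorem aux13_CRT {ι : Type*} [Fintype ι] (I : ι → Ideal R) (h : Pairwise (Function.onFun IsCoprime I)) :
    Nonempty ((R ⧸ (⨅ i, I i)) ≃ₗ[R] ((i : ι) → R ⧸ I i)) := by
  have hle : (⨅ i, I i : Ideal R) ≤ LinearMap.ker (LinearMap.pi fun i => (I i).mkQ) := by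
    rw [LinearMap.ker_pi]
    exact le_of_eq (by simp [Submodule.ker_mkQ])
  let L : (R ⧸ (⨅ i, I i)) →ₗ[R] ((i : ι) → R ⧸ I i) := Submodule.liftQ _ _ hle
  have hL : ⇑L = ⇑(Ideal.quotientInfToPiQuotient I) := by
    funext x
    obtain ⟨r, rfl⟩ := Ideal.Quotient.mk_surjective x
    rfl
  refine ⟨LinearEquiv.ofBijective L ?_⟩
  rw [hL]
  exact ⟨Ideal.quotientInfToPiQuotient_inj I, Ideal.quotientInfToPiQuotient_surj h⟩

end Helpers

theorem aux13_prod_ne_bot' {R : Type*} [CommRing R] [IsDomain R] {ι : Type*} (s : Finset ι)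
    (f : ι → Ideal R) (h : ∀ i ∈ s, f i ≠ ⊥) : ∏ i ∈ s, f i ≠ ⊥ := by
  refine Finset.prod_induction f (· ≠ ⊥) (fun a b ha hb hab => ?_) (by simp [Ideal.one_eq_top]) h
  rcases Ideal.mul_eq_bot.mp hab with h | h
  · exact ha h
  · exact hb h


theorem aux13_unit {R : Type*} [CommRing R] (b : Ideal R) (s : R)
    (h : ∀ m : Ideal R, m.IsMaximal → b ≤ m → s ∉ m) :
    IsUnit (Ideal.Quotient.mk b s) := by
  by_cases hb : b ⊔ Ideal.span {s} = ⊤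
  · have h1 : (1 : R) ∈ b ⊔ Ideal.span {s} := by rw [hb]; trivial
    obtain ⟨x, hx, y, hy, hxy⟩ := Submodule.mem_sup.mp h1
    obtain ⟨t, ht⟩ := Ideal.mem_span_singleton'.mp hy
    refine isUnit_iff_exists_inv.mpr ⟨Ideal.Quotient.mk b t, ?_⟩
    rw [← map_mul, ← map_one (Ideal.Quotient.mk b), Ideal.Quotient.mk_eq_mk_iff_sub_mem]
    have hst : s * t - 1 = -x := by
      have : x = 1 - t * s := by rw [← hxy, ht]; ring
      rw [this]; ring
    rw [hst]
    exact b.neg_mem hx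
  · exfalso
    obtain ⟨m, hm, hle⟩ := Ideal.exists_le_maximal _ hb
    refine h m hm (le_trans le_sup_left hle) (hle ?_)
    exact le_sup_right (a := b) (Ideal.subset_span rfl)

theorem aux13_loc_quot {R A : Type*} [CommRing R] [CommRing A] [Algebra R A]
    (S : Submonoid R) [IsLocalization S A] (b : Ideal R)
    (hu : ∀ y : S, IsUnit (Ideal.Quotient.mk b (y : R))) :
    Nonempty ((A ⧸ Ideal.map (algebraMap R A) b) ≃ₗ[R] R ⧸ b) := by
  set J := Ideal.map (algebraMap R A) b with hJ
  let f : R ⧸ b →+* A ⧸ J := Ideal.quotientMap J (algebraMap R A) Ideal.le_comap_map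
  let g : A →+* R ⧸ b := IsLocalization.lift (S := A) (g := Ideal.Quotient.mk b) hu
  have hker : J ≤ RingHom.ker g := by
    rw [hJ, Ideal.map_le_iff_le_comap]
    intro x hx
    simp only [Ideal.mem_comap, RingHom.mem_ker]
    show g (algebraMap R A x) = 0
    rw [IsLocalization.lift_eq hu x]
    exact Ideal.Quotient.eq_zero_iff_mem.mpr hx
  let g' : A ⧸ J →+* R ⧸ b := Ideal.Quotient.lift J g (fun a ha => hker ha)
  have h1 : ∀ x, g' (f x) = x := by
    intro x
    obtain ⟨r, rfl⟩ := Ideal.Quotient.mk_surjective x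
    show g' (f (Ideal.Quotient.mk b r)) = _
    rw [show f (Ideal.Quotient.mk b r) = Ideal.Quotient.mk J (algebraMap R A r) from
      Ideal.quotientMap_mk]
    show g (algebraMap R A r) = _
    rw [IsLocalization.lift_eq hu r]
  have h2 : ∀ y, f (g' y) = y := by
    have hext : (f.comp g').comp (Ideal.Quotient.mk J) = Ideal.Quotient.mk J := by
      have : ((f.comp g').comp (Ideal.Quotient.mk J)).comp (algebraMap R A)
          = (Ideal.Quotient.mk J).comp (algebraMap R A) := by
        ext r
        show f (g' (Ideal.Quotient.mk J (algebraMap R A r))) = _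
        have : g' (Ideal.Quotient.mk J (algebraMap R A r)) = Ideal.Quotient.mk b r := by
          show g (algebraMap R A r) = _
          rw [IsLocalization.lift_eq hu r]
        rw [this]
        exact Ideal.quotientMap_mk
      exact IsLocalization.ringHom_ext S this
    intro y
    obtain ⟨a, rfl⟩ := Ideal.Quotient.mk_surjective y
    exact RingHom.congr_fun hext a
  let e : R ⧸ b ≃+* A ⧸ J :=
    RingEquiv.ofRingHom f g' (RingHom.ext h2) (RingHom.ext h1)
  refine ⟨(LinearEquiv.symm ?_)⟩
  exact
  { e with
    map_smul' := by
      intro r x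
      show e (r • x) = r • e x
      rw [Algebra.smul_def, Algebra.smul_def, map_mul]
      congr 1 }

universe u v

theorem aux13_torsion_primePow {R : Type u} [CommRing R] [IsDomain R] [IsDedekindDomain R]
    {T : Type v} [AddCommGroup T] [Module R T] [Module.Finite R T]
    (hT : Module.IsTorsion R T) :
    ∃ (n : ℕ) (Q : Fin n → Ideal R) (e : Fin n → ℕ),
      (∀ i, (Q i).IsMaximal) ∧ (∀ i, Q i ≠ ⊥) ∧
      Nonempty (T ≃ₗ[R] ((i : Fin n) → R ⧸ (Q i) ^ (e i))) := by
  classical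
  by_cases hsub : Subsingleton T
  · refine ⟨0, Fin.elim0, Fin.elim0, fun i => i.elim0, fun i => i.elim0, ⟨?_⟩⟩
    exact
      { toFun := fun _ i => i.elim0
        invFun := fun _ => 0
        map_add' := fun _ _ => Subsingleton.elim _ _
        map_smul' := fun _ _ => Subsingleton.elim _ _
        left_inv := fun _ => Subsingleton.elim _ _
        right_inv := fun _ => Subsingleton.elim _ _ }
  -- get a nonzero annihilating element
  have hann := Submodule.annihilator_top_inter_nonZeroDivisors (R := R) (M := T) hT
  obtain ⟨r, hr1, hr2⟩ := hann
  have hr0 : r ≠ 0 := nonZeroDivisors.ne_zero hr2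
  have hrT : ∀ x : T, r • x = 0 := fun x => Submodule.mem_annihilator.mp hr1 x mem_top
  have hrunit : ¬ IsUnit r := by
    intro hu
    exact hsub ⟨fun x y => by
      have hx : x = 0 := by
        calc x = hu.unit⁻¹ • (r • x) := by
                rw [← smul_assoc]
                simp [Units.smul_def, IsUnit.unit_spec]
          _ = 0 := by rw [hrT x, smul_zero]
      have hy : y = 0 := by
        calc y = hu.unit⁻¹ • (r • y) := by
                rw [← smul_assoc]
                simp [Units.smul_def, IsUnit.unit_spec]
          _ = 0 := by rw [hrT y, smul_zero]
      rw [hx, hy]⟩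
  have hspan0 : (Ideal.span {r} : Ideal R) ≠ ⊥ := by
    rw [Ne, Ideal.span_singleton_eq_bot]; exact hr0
  have hspan0' : (Ideal.span {r} : Ideal R) ≠ 0 := hspan0
  set F : Finset (Ideal R) := (factors (Ideal.span {r} : Ideal R)).toFinset with hF
  have hFprime : ∀ q ∈ F, Prime q := fun q hq => prime_of_factor q (Multiset.mem_toFinset.mp hq)
  -- the multiplicative set avoiding all prime factors of (r)
  set S : Submonoid R :=
    { carrier := {s : R | ∀ q ∈ F, s ∉ q}
      one_mem' := fun q hq h1 =>
        (Ideal.isPrime_of_prime (hFprime q hq)).ne_top (Ideal.eq_top_of_isUnit_mem _ h1 isUnit_one)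
      mul_mem' := by
        intro a b ha hb q hq hab
        rcases (Ideal.isPrime_of_prime (hFprime q hq)).mem_or_mem hab with h | h
        · exact ha q hq h
        · exact hb q hq h } with hS
  have hmemS : ∀ s : R, s ∈ S ↔ ∀ q ∈ F, s ∉ q := fun s => Iff.rfl
  -- maximal ideals containing (r) are in F and hence avoid S
  have hmaxF : ∀ m : Ideal R, m.IsMaximal → Ideal.span {r} ≤ m → m ∈ F := by
    intro m hm hle
    have hm0 : m ≠ ⊥ := by
      intro h
      exact hr0 (by simpa [h, Submodule.mem_bot] using hle (Ideal.subset_span rfl))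
    have hmp : Prime m := Ideal.prime_of_isPrime hm0 hm.isPrime
    obtain ⟨q, hq, hassoc⟩ :=
      exists_mem_factors_of_dvd hspan0' hmp.irreducible ((Ideal.dvd_iff_le).mpr hle)
    rw [associated_iff_eq.mp hassoc]
    exact Multiset.mem_toFinset.mpr hq
  have hSnzd : S ≤ nonZeroDivisors R := by
    intro s hs
    refine mem_nonZeroDivisors_of_ne_zero (fun h0 => ?_)
    -- s = 0 lies in every prime factor; F is nonempty since r is not a unit
    have hFne : F.Nonempty := by
      obtain ⟨m, hm, hle⟩ := Ideal.exists_le_maximal (Ideal.span {r})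
        (by rw [Ne, Ideal.span_singleton_eq_top]; exact hrunit)
      exact ⟨m, hmaxF m hm hle⟩
    obtain ⟨q, hq⟩ := hFne
    exact hs q hq (by rw [h0]; exact q.zero_mem)
  set A := Localization S with hA
  haveI : IsLocalization S A := Localization.isLocalization
  haveI : IsDomain A := IsLocalization.isDomain_localization hSnzd
  haveI : IsDedekindDomain A := IsLocalization.isDedekindDomain R hSnzd A
  -- A has finitely many primes, hence is a PID
  haveI hfinA : Finite {p : Ideal A // p.IsPrime} := by
    have hsubF : ∀ p : {p : Ideal R // p.IsPrime ∧ Disjoint (↑S : Set R) ↑p},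
        p.1 ∈ insert ⊥ F := by
      rintro ⟨p, hp, hd⟩
      show p ∈ insert ⊥ F
      by_cases hp0 : p = ⊥
      · exact Finset.mem_insert.mpr (Or.inl hp0)
      refine Finset.mem_insert.mpr (Or.inr ?_)
      have hsub : (↑p : Set R) ⊆ ⋃ q ∈ F, ((q : Ideal R) : Set R) := by
        intro x hx
        have hxS : x ∉ S := fun hxS => Set.disjoint_left.mp hd hxS hx
        rw [hmemS] at hxS
        push_neg at hxS
        obtain ⟨q, hq, hxq⟩ := hxS
        exact Set.mem_biUnion hq hxq
      obtain ⟨q, hqF, hle⟩ :=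
        ((Ideal.subset_union_prime (⊥ : Ideal R) ⊥
          (fun q hq _ _ => Ideal.isPrime_of_prime (hFprime q hq))).mp hsub)
      have hpm : p.IsMaximal := Ring.DimensionLEOne.maximalOfPrime hp0 hp
      rwa [hpm.eq_of_le (Ideal.isPrime_of_prime (hFprime q hqF)).ne_top hle]
    have h1 : Finite {p : Ideal R // p.IsPrime ∧ Disjoint (↑S : Set R) ↑p} := by
      refine Finite.of_injective
        (fun p => (⟨p.1, hsubF p⟩ : ↥(insert ⊥ F))) (fun p p' h => ?_)
      exact Subtype.ext (Subtype.mk_eq_mk.mp h)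
    exact Finite.of_equiv _ (IsLocalization.orderIsoOfPrime S A).toEquiv.symm
  haveI : IsPrincipalIdealRing A := by
    refine IsPrincipalIdealRing.of_finite_primes (Set.finite_coe_iff.mp ?_)
    exact hfinA
  -- T is a module over A
  have hbyset : Module.IsTorsionBySet R T ((Ideal.span {r} : Ideal R) : Set R) :=
    (Module.isTorsionBySet_span_singleton_iff r).mpr hrT
  letI : Module (R ⧸ (Ideal.span {r} : Ideal R)) T := hbyset.module
  haveI : IsScalarTower R (R ⧸ (Ideal.span {r} : Ideal R)) T := hbyset.isScalarTower
  have hu0 : ∀ y : S, IsUnit (Ideal.Quotient.mk (Ideal.span {r} : Ideal R) (y : R)) := by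
    intro y
    refine aux13_unit _ _ (fun m hm hle hymem => ?_)
    exact y.2 m (hmaxF m hm hle) hymem
  set φ : A →+* R ⧸ (Ideal.span {r} : Ideal R) := IsLocalization.lift (S := A) hu0 with hφ
  letI modA : Module A T := Module.compHom T φ
  haveI towerRAT : IsScalarTower R A T := by
    constructor
    intro r' a x
    show φ (r' • a) • x = r' • (φ a • x)
    rw [Algebra.smul_def, map_mul, mul_smul, IsLocalization.lift_eq hu0]
    exact hbyset.mk_smul r' (φ a • x)
  haveI : Module.Finite A T := Module.Finite.of_restrictScalars_finite R A T
  have hra : algebraMap R A r ≠ 0 :=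
    IsLocalization.to_map_ne_zero_of_mem_nonZeroDivisors A hSnzd hr2
  have hTA : Module.IsTorsion A T := by
    intro x
    refine ⟨⟨algebraMap R A r, mem_nonZeroDivisors_of_ne_zero hra⟩, ?_⟩
    show (algebraMap R A r) • x = 0
    rw [algebraMap_smul]
    exact hrT x
  -- transfer to a ULift to fix universes, then apply the PID structure theorem
  let eU : ULift.{u} T ≃ₗ[A] T := ULift.moduleEquiv
  haveI : Module.Finite A (ULift.{u} T) := Module.Finite.equiv eU.symm
  have hTAU : Module.IsTorsion A (ULift.{u} T) := by
    intro x
    obtain ⟨a, ha⟩ := @hTA (eU x)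
    exact ⟨a, eU.injective (by rw [Submonoid.smul_def, map_smul, ← Submonoid.smul_def, ha, map_zero])⟩
  obtain ⟨ι, hfint, pp, hirr, ee, ⟨L⟩⟩ :=
    Module.equiv_directSum_of_isTorsion (R := A) (M := ULift.{u} T) hTAU
  haveI := hfint
  let L2 : T ≃ₗ[A] ((i : ι) → A ⧸ (Ideal.span {pp i ^ ee i})) :=
    (eU.symm.trans L).trans (DirectSum.linearEquivFunOnFintype A ι _)
  let L3 := L2.restrictScalars R
  -- contract the prime powers to R
  set q : ι → Ideal R := fun i => Ideal.comap (algebraMap R A) (Ideal.span {pp i}) with hq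
  have hprime_p : ∀ i, Prime (pp i) := fun i => (hirr i).prime
  have hspanp : ∀ i, (Ideal.span {pp i} : Ideal A).IsPrime := fun i =>
    (Ideal.span_singleton_prime (hprime_p i).ne_zero).mpr (hprime_p i)
  have hqp : ∀ i, (q i).IsPrime := fun i => by
    haveI := hspanp i
    exact Ideal.IsPrime.comap _
  have hmapq : ∀ i, Ideal.map (algebraMap R A) (q i) = Ideal.span {pp i} := fun i =>
    IsLocalization.map_comap S A (Ideal.span {pp i} : Ideal A)
  have hq0 : ∀ i, q i ≠ ⊥ := by
    intro i h
    have := hmapq i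
    rw [h, Ideal.map_bot] at this
    exact (hprime_p i).ne_zero (Ideal.span_singleton_eq_bot.mp this.symm)
  have hqmax : ∀ i, (q i).IsMaximal := fun i =>
    Ring.DimensionLEOne.maximalOfPrime (hq0 i) (hqp i)
  have hqS : ∀ i, ∀ y : S, (y : R) ∉ q i := by
    intro i y hy
    have h1 : algebraMap R A y ∈ Ideal.span {pp i} := hy
    have h2 := Ideal.eq_top_of_isUnit_mem _ h1 (IsLocalization.map_units A y)
    exact (hprime_p i).not_unit (Ideal.span_singleton_eq_top.mp h2)
  have perfac : ∀ i, Nonempty ((A ⧸ (Ideal.span {pp i ^ ee i} : Ideal A)) ≃ₗ[R]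
      R ⧸ (q i) ^ (ee i)) := by
    intro i
    have hu : ∀ y : S, IsUnit (Ideal.Quotient.mk ((q i) ^ (ee i)) (y : R)) := by
      intro y
      refine aux13_unit _ _ (fun m hm hle hymem => ?_)
      rcases Nat.eq_zero_or_pos (ee i) with h0 | hpos
      · rw [h0, pow_zero, Ideal.one_eq_top] at hle
        exact hm.ne_top (top_le_iff.mp hle)
      · have hqm : q i ≤ m := hm.isPrime.le_of_pow_le hle
        have heq : q i = m := (hqmax i).eq_of_le hm.ne_top hqm
        exact hqS i y (heq ▸ hymem)
    have hmapb : Ideal.map (algebraMap R A) ((q i) ^ (ee i)) = Ideal.span {pp i ^ ee i} := by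
      rw [Ideal.map_pow, hmapq i, Ideal.span_singleton_pow]
    obtain ⟨E⟩ := aux13_loc_quot (A := A) S ((q i) ^ (ee i)) hu
    exact ⟨((Submodule.quotEquivOfEq _ _ hmapb.symm).restrictScalars R).trans E⟩
  -- reindex by Fin n
  let eqI := Fintype.equivFin ι
  refine ⟨Fintype.card ι, fun j => q (eqI.symm j), fun j => ee (eqI.symm j),
    fun j => hqmax _, fun j => hq0 _, ⟨?_⟩⟩
  have step1 : T ≃ₗ[R] ((i : ι) → R ⧸ (q i) ^ (ee i)) :=
    L3.trans (LinearEquiv.piCongrRight fun i => (perfac i).some)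
  exact step1.trans (LinearEquiv.piCongrLeft' R (fun i => R ⧸ (q i) ^ (ee i)) eqI)

theorem aux13_assemble {R : Type*} [CommRing R] [IsDomain R] [IsDedekindDomain R]
    (n : ℕ) (Q : Fin n → Ideal R) (e : Fin n → ℕ)
    (hmax : ∀ i, (Q i).IsMaximal) (hbot : ∀ i, Q i ≠ ⊥) :
    ∃ (a : Fin n → Ideal R),
      (∀ i j : Fin n, i ≤ j → a j ≤ a i) ∧ (∀ j, a j ≠ ⊥) ∧
      Nonempty (((i : Fin n) → R ⧸ (Q i) ^ (e i)) ≃ₗ[R] ((j : Fin n) → R ⧸ a j)) := by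
  classical
  set Qs : Finset (Ideal R) := Finset.image Q Finset.univ with hQs
  have hmem : ∀ i, Q i ∈ Qs := fun i => Finset.mem_image_of_mem Q (Finset.mem_univ i)
  set f : Fin n → ↥Qs := fun i => ⟨Q i, hmem i⟩ with hf
  set t : ↥Qs → Fin n → ℕ := fun J i => if Q i = J.1 then e i else 0 with ht
  set c : ↥Qs → Fin n → ℕ := fun J => t J ∘ (Tuple.sort (t J)) with hc
  have hcmono : ∀ J, Monotone (c J) := fun J => Tuple.monotone_sort (t J)
  have hJmax : ∀ J : ↥Qs, (J.1).IsMaximal := by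
    rintro ⟨J, hJ⟩
    obtain ⟨i, -, rfl⟩ := Finset.mem_image.mp hJ
    exact hmax i
  have hJbot : ∀ J : ↥Qs, J.1 ≠ ⊥ := by
    rintro ⟨J, hJ⟩
    obtain ⟨i, -, rfl⟩ := Finset.mem_image.mp hJ
    exact hbot i
  refine ⟨fun j => ∏ J : ↥Qs, J.1 ^ (c J j), ?_, ?_, ?_⟩
  · intro i j hij
    exact aux13_prod_mono _ _ _ fun J _ => Ideal.pow_le_pow_right (hcmono J hij)
  · intro j
    exact aux13_prod_ne_bot' _ _ fun J _ => by
      show (J.1 : Ideal R) ^ (c J j) ≠ ⊥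
      rw [← Ideal.zero_eq_bot]
      exact pow_ne_zero _ (by rw [Ideal.zero_eq_bot]; exact hJbot J)
  · -- the big equivalence
    -- coprimality
    have hcop : ∀ j : Fin n, Pairwise (Function.onFun IsCoprime fun J : ↥Qs => J.1 ^ (c J j)) := by
      intro j J J' hne
      have h1 : J.1 ⊔ J'.1 = ⊤ :=
        (hJmax J).coprime_of_ne (hJmax J') (fun h => hne (Subtype.ext h))
      exact (Ideal.isCoprime_iff_sup_eq.mpr h1).pow
    have hprod : ∀ j : Fin n, (⨅ J : ↥Qs, J.1 ^ (c J j)) = ∏ J : ↥Qs, J.1 ^ (c J j) := by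
      intro j
      rw [← IsDedekindDomain.inf_prime_pow_eq_prod Finset.univ (fun J : ↥Qs => J.1)
        (fun J => c J j) (fun J _ => Ideal.prime_of_isPrime (hJbot J) (hJmax J).isPrime)
        (fun J _ J' _ hne => fun h => hne (Subtype.ext h))]
      simp [Finset.inf_eq_iInf]
    -- CRT for each j
    have crt : ∀ j : Fin n,
        Nonempty ((R ⧸ (∏ J : ↥Qs, J.1 ^ (c J j))) ≃ₗ[R] ((J : ↥Qs) → R ⧸ J.1 ^ (c J j))) := by
      intro j
      obtain ⟨E⟩ := aux13_CRT (fun J : ↥Qs => J.1 ^ (c J j)) (hcop j)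
      exact ⟨(Submodule.quotEquivOfEq _ _ (hprod j).symm).trans E⟩
    -- fiber step for each J
    have fiber : ∀ J : ↥Qs,
        Nonempty (((i : {x : Fin n // f x = J}) → R ⧸ (Q i.1) ^ (e i.1)) ≃ₗ[R]
          ((i : Fin n) → R ⧸ J.1 ^ (t J i))) := by
      intro J
      have key : ∀ i : {x : Fin n // Q x = J.1}, (Q i.1) ^ (e i.1) = J.1 ^ (t J i.1) := by
        rintro ⟨i, hi⟩
        simp only [ht, hi, if_pos]
      have sub1 : ∀ i : {x : Fin n // ¬ Q x = J.1}, Subsingleton (R ⧸ J.1 ^ (t J i.1)) := by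
        rintro ⟨i, hi⟩
        rw [Submodule.Quotient.subsingleton_iff]
        simp only [ht, if_neg hi, pow_zero, Ideal.one_eq_top]
      haveI : ∀ i : {x : Fin n // ¬ Q x = J.1}, Subsingleton (R ⧸ J.1 ^ (t J i.1)) := sub1
      have e1 : ((i : {x : Fin n // f x = J}) → R ⧸ (Q i.1) ^ (e i.1)) ≃ₗ[R]
          ((i : {x : Fin n // Q x = J.1}) → R ⧸ (Q i.1) ^ (e i.1)) :=
        LinearEquiv.piCongrLeft' R (fun i : {x : Fin n // f x = J} => R ⧸ (Q i.1) ^ (e i.1))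
          (Equiv.subtypeEquivRight (fun x =>
            ⟨fun h => congrArg Subtype.val h, fun h => Subtype.ext h⟩))
      have e2 : ((i : {x : Fin n // Q x = J.1}) → R ⧸ (Q i.1) ^ (e i.1)) ≃ₗ[R]
          ((i : {x : Fin n // Q x = J.1}) → R ⧸ J.1 ^ (t J i.1)) :=
        LinearEquiv.piCongrRight fun i => Submodule.quotEquivOfEq _ _ (key i)
      have e3 : ((i : Fin n) → R ⧸ J.1 ^ (t J i)) ≃ₗ[R]
          ((i : {x : Fin n // Q x = J.1}) → R ⧸ J.1 ^ (t J i.1)) ×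
            ((i : {x : Fin n // ¬ Q x = J.1}) → R ⧸ J.1 ^ (t J i.1)) :=
        aux13PiSplit R (fun x => Q x = J.1) (fun i => R ⧸ J.1 ^ (t J i))
      exact ⟨e1.trans <| e2.trans <|
        ((aux13ProdSubsingleton R _ _).symm.trans e3.symm)⟩
    -- global composition
    have G1 := (LinearEquiv.piCongrLeft R (fun i : Fin n => R ⧸ (Q i) ^ (e i))
      (Equiv.sigmaFiberEquiv f)).symm
    have G2 := LinearEquiv.piCurry R
      (fun (J : ↥Qs) (i : {x : Fin n // f x = J}) => R ⧸ (Q i.1) ^ (e i.1))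
    have G3 := LinearEquiv.piCongrRight fun J : ↥Qs => (fiber J).some
    have G4 := LinearEquiv.piCongrRight fun J : ↥Qs =>
      (LinearEquiv.piCongrLeft R (fun i : Fin n => R ⧸ J.1 ^ (t J i)) (Tuple.sort (t J))).symm
    have G5 := aux13Flip R (fun (J : ↥Qs) (j : Fin n) => R ⧸ J.1 ^ (c J j))
    have G6 := LinearEquiv.piCongrRight fun j : Fin n => (crt j).some.symm
    exact ⟨G1.trans <| G2.trans <| G3.trans <| G4.trans <| G5.trans G6⟩

/-- Over a Dedekind domain, every finitely generated module is isomorphic to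
`(⊕ᵢ R⧸aᵢ) ⊕ P` with `a₁ ⊇ ⋯ ⊇ a_k` nonzero ideals and `P` finitely generated
projective. -/
theorem stmt_13 {R : Type*} [CommRing R] [IsDomain R] [IsDedekindDomain R]
    (M : Type*) [AddCommGroup M] [Module R M] [Module.Finite R M] :
    ∃ (k : ℕ) (a : Fin k → Ideal R),
      (∀ i j : Fin k, i ≤ j → a j ≤ a i) ∧ (∀ i, a i ≠ ⊥) ∧
      ∃ P : Submodule R M, Module.Finite R ↥P ∧ Module.Projective R ↥P ∧
        Nonempty (M ≃ₗ[R] (((i : Fin k) → R ⧸ a i) × ↥P)) := by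
  classical
  by_cases hF : IsField R
  · letI := hF.toField
    refine ⟨0, Fin.elim0, fun i j _ => i.elim0, fun i => i.elim0, ⊤,
      Module.Finite.equiv Submodule.topEquiv.symm, ?_, ⟨?_⟩⟩
    · exact Module.Projective.of_equiv Submodule.topEquiv.symm
    · exact Submodule.topEquiv.symm.trans
        ((aux13ProdSubsingleton R (↥(⊤ : Submodule R M)) _).symm.trans
          (LinearEquiv.prodComm R _ _))
  haveI : IsNoetherianRing R := inferInstance
  set T : Submodule R M := Submodule.torsion R M with hTdef
  haveI : Module.Finite R ↥T := inferInstance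
  haveI : Module.FinitePresentation R (M ⧸ T) := Module.finitePresentation_of_finite R _
  haveI hproj : Module.Projective R (M ⧸ T) := by
    refine Module.projective_of_localization_maximal (fun I hI => ?_)
    have hIbot : I ≠ ⊥ := Ring.ne_bot_of_isMaximal_of_not_isField hI hF
    haveI : I.IsPrime := hI.isPrime
    haveI : IsDiscreteValuationRing (Localization.AtPrime I) :=
      IsLocalization.AtPrime.isDiscreteValuationRing_of_dedekind_domain R hIbot _
    haveI : Module.Finite (Localization.AtPrime I) (LocalizedModule I.primeCompl (M ⧸ T)) :=
      Module.Finite.of_isLocalizedModule I.primeCompl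
        (LocalizedModule.mkLinearMap I.primeCompl (M ⧸ T))
    haveI : Module.IsTorsionFree (Localization.AtPrime I)
        (LocalizedModule I.primeCompl (M ⧸ T)) := by
      refine Module.IsTorsionFree.of_smul_eq_zero (fun c x hcx => ?_)
      induction c using Localization.induction_on with
      | H y =>
      obtain ⟨A, s⟩ := y
      induction x using LocalizedModule.induction_on with
      | h m t =>
        rw [LocalizedModule.mk_smul_mk] at hcx
        have h0 : LocalizedModule.mk (A • m) (s * t) = LocalizedModule.mk 0 1 := by
          rw [hcx, LocalizedModule.zero_mk]
        obtain ⟨u, hu⟩ := LocalizedModule.mk_eq.mp h0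
        rw [smul_zero, smul_zero, one_smul] at hu
        have hu' : ((u : R) * A) • m = 0 := by
          rw [mul_smul]; exact hu
        rcases smul_eq_zero.1 hu' with h | h
        · have hune : (u : R) ≠ 0 := fun h0' => u.2 (by rw [h0']; exact I.zero_mem)
          rcases mul_eq_zero.mp h with h' | h'
          · exact absurd h' hune
          · left
            rw [h', Localization.mk_zero]
        · right
          rw [h, LocalizedModule.zero_mk]
    haveI : Module.Free (Localization.AtPrime I) (LocalizedModule I.primeCompl (M ⧸ T)) :=
      Module.free_of_finite_type_torsion_free'
    infer_instance
  obtain ⟨f, hf⟩ := Module.projective_lifting_property T.mkQ LinearMap.id T.mkQ_surjective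
  have hfinj : Function.Injective f := fun x y hxy => by
    have hx := LinearMap.congr_fun hf x
    have hy := LinearMap.congr_fun hf y
    simp only [LinearMap.coe_comp, Function.comp_apply, LinearMap.id_apply] at hx hy
    rw [← hx, ← hy, hxy]
  let e1 : (↥T × (M ⧸ T)) ≃ₗ[R] M := lequivProdOfRightSplitExact T.injective_subtype
    (by rw [Submodule.range_subtype, Submodule.ker_mkQ]) hf
  let P := LinearMap.range f
  let eP : (M ⧸ T) ≃ₗ[R] ↥P := LinearEquiv.ofInjective f hfinj
  obtain ⟨n, Q, ee, hmax, hbot, ⟨Et0⟩⟩ :=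
    aux13_torsion_primePow (T := ↥T) (Submodule.torsion_isTorsion)
  obtain ⟨a, hchain, habot, ⟨Ea⟩⟩ := aux13_assemble n Q ee hmax hbot
  exact ⟨n, a, hchain, habot, P, Module.Finite.equiv eP, Module.Projective.of_equiv eP,
    ⟨e1.symm.trans (LinearEquiv.prodCongr (Et0.trans Ea) eP)⟩⟩
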